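/- Arithmetic form of Lemma 3.1 (α¹ = 10π², i.e. α̃ = 5/2 is the maximal penalization for which the Clifford torus remains stable): the set { α̃ ∈ ℝ : α̃ ≥ 0 and h(α̃,k,l) ≥ 0 for all natural numbers k, l with (k,l) ≠ (0,0) } equals the closed interval [0, 5/2]. In particular, for every α̃ > 5/2 there is a mode with negative coefficient, namely h(α̃,1,2) = 24 − (48/5)·α̃ < 0. -/

import Mathlib

/-- The coefficient of the second variation of the penalized Willmore functional
`W − 4π²α̃·Π¹` at the Clifford torus on an extremal Fourier mode of type `(k,l)`. -/
noncomputable def h (α : ℝ) (k l : ℕ) : ℝ :=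
  2 * ((k:ℝ)^2 + (l:ℝ)^2)^2 - 6 * ((k:ℝ)^2 + (l:ℝ)^2) + 4
    - 8 * α * k * l + 16 * α * k * l / ((k:ℝ)^2 + (l:ℝ)^2)

lemma h_val_12 (α : ℝ) : h α 1 2 = 24 - 48/5 * α := by
  simp only [h]
  norm_num
  ring

lemma h_factored (α : ℝ) (k l : ℕ) (hs : ((k:ℝ)^2 + (l:ℝ)^2) ≠ 0) :
    h α k l = (((k:ℝ)^2 + (l:ℝ)^2) - 2) *
        (2 * ((k:ℝ)^2 + (l:ℝ)^2) * (((k:ℝ)^2 + (l:ℝ)^2) - 1) - 8 * α * k * l)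
      / ((k:ℝ)^2 + (l:ℝ)^2) := by
  rw [h]
  field_simp
  ring

lemma key_ineq (k l : ℕ) (hk : 1 ≤ k) (hl : 1 ≤ l) (h2 : ¬(k = 1 ∧ l = 1)) :
    10 * ((k:ℝ) * l) ≤ ((k:ℝ)^2 + l^2) * (((k:ℝ)^2 + l^2) - 1) := by
  have hkl : 2 ≤ k * l := by
    have h1 : 1 ≤ k * l := Nat.one_le_iff_ne_zero.mpr (by positivity)
    have hne : k * l ≠ 1 := by
      intro hh
      exact h2 ⟨Nat.dvd_one.mp ⟨l, hh.symm⟩, Nat.dvd_one.mp ⟨k, by rw [mul_comm]; exact hh.symm⟩⟩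
    omega
  rcases eq_or_lt_of_le hkl with h2' | h3
  · have hk2 : k ≤ 2 := Nat.le_of_dvd (by norm_num) ⟨l, h2'⟩
    have hl2 : l ≤ 2 := Nat.le_of_dvd (by norm_num) ⟨k, by rw [mul_comm]; exact h2'⟩
    interval_cases k <;> interval_cases l <;> revert h2' <;> norm_num
  · have h3' : (3:ℝ) ≤ (k:ℝ) * l := by exact_mod_cast h3
    nlinarith [sq_nonneg ((k:ℝ) - l), sq_nonneg ((k:ℝ) * l)]

lemma h_nonneg (α : ℝ) (hα0 : 0 ≤ α) (hα : α ≤ 5/2) (k l : ℕ) (hkl : (k, l) ≠ (0, 0)) :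
    0 ≤ h α k l := by
  have hn : 1 ≤ k ∨ 1 ≤ l := by
    rcases Nat.eq_zero_or_pos k with hk | hk
    · rcases Nat.eq_zero_or_pos l with hl | hl
      · exact absurd (by simp [hk, hl]) hkl
      · exact Or.inr hl
    · exact Or.inl hk
  have hspos : (0:ℝ) < (k:ℝ)^2 + (l:ℝ)^2 := by
    rcases hn with hk | hl
    · have : (1:ℝ) ≤ (k:ℝ) := by exact_mod_cast hk
      positivity
    · have : (1:ℝ) ≤ (l:ℝ) := by exact_mod_cast hl
      positivity
  rw [h_factored α k l (ne_of_gt hspos)]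
  apply div_nonneg _ (le_of_lt hspos)
  rcases Nat.eq_zero_or_pos k with hk | hk
  · subst hk
    have hl : 1 ≤ l := by
      rcases hn with h | h
      · omega
      · exact h
    simp only [Nat.cast_zero, mul_zero, zero_mul, mul_zero, sub_zero]
    rcases eq_or_lt_of_le hl with h1 | h1
    · rw [← h1]; norm_num
    · have h2 : (2:ℝ) ≤ (l:ℝ) := by exact_mod_cast h1
      have hs4 : (4:ℝ) ≤ (l:ℝ)^2 := by nlinarith
      have := mul_nonneg (mul_nonneg (by linarith : (0:ℝ) ≤ 2 * ((0:ℝ)^2 + (l:ℝ)^2))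
        (by norm_num; nlinarith : (0:ℝ) ≤ (0:ℝ)^2 + (l:ℝ)^2 - 1)) (by norm_num; nlinarith : (0:ℝ) ≤ (0:ℝ)^2 + (l:ℝ)^2 - 2)
      nlinarith [this]
  · rcases Nat.eq_zero_or_pos l with hl | hl
    · subst hl
      simp only [Nat.cast_zero, mul_zero, zero_mul, mul_zero, sub_zero]
      rcases eq_or_lt_of_le (Nat.one_le_of_lt hk) with h1 | h1
      · rw [← h1]; norm_num
      · have h2 : (2:ℝ) ≤ (k:ℝ) := by exact_mod_cast h1
        have hs4 : (4:ℝ) ≤ (k:ℝ)^2 := by nlinarith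
        have := mul_nonneg (mul_nonneg (by linarith : (0:ℝ) ≤ 2 * ((k:ℝ)^2 + (0:ℝ)^2))
          (by norm_num; nlinarith : (0:ℝ) ≤ (k:ℝ)^2 + (0:ℝ)^2 - 1)) (by norm_num; nlinarith : (0:ℝ) ≤ (k:ℝ)^2 + (0:ℝ)^2 - 2)
        nlinarith [this]
    · by_cases h11 : k = 1 ∧ l = 1
      · obtain ⟨rfl, rfl⟩ := h11
        norm_num
      · have hkey := key_ineq k l hk hl h11
        have hkr : (1:ℝ) ≤ (k:ℝ) := by exact_mod_cast hk
        have hlr : (1:ℝ) ≤ (l:ℝ) := by exact_mod_cast hl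
        have hs2 : (2:ℝ) ≤ (k:ℝ)^2 + (l:ℝ)^2 := by nlinarith
        apply mul_nonneg (by linarith)
        have hklpos : (0:ℝ) ≤ (k:ℝ) * l := by positivity
        nlinarith

theorem critical_multiplier_is_five_halves :
    {α : ℝ | 0 ≤ α ∧ ∀ k l : ℕ, (k, l) ≠ (0, 0) → 0 ≤ h α k l}
        = Set.Icc (0:ℝ) (5/2)
    ∧ ∀ α : ℝ, 5/2 < α → (h α 1 2 = 24 - 48/5 * α ∧ h α 1 2 < 0) := by
  constructor
  · ext α
    simp only [Set.mem_setOf_eq, Set.mem_Icc]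
    constructor
    · rintro ⟨h0, hall⟩
      refine ⟨h0, ?_⟩
      have := hall 1 2 (by simp)
      rw [h_val_12] at this
      linarith
    · rintro ⟨h0, h52⟩
      exact ⟨h0, h_nonneg α h0 h52⟩
  · intro α hα
    refine ⟨h_val_12 α, ?_⟩
    rw [h_val_12]
    linarith
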